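/- In a demi-matroid (E,s,t) with |E| = n and k = s(E), the generalized Singleton bound σ_i ≤ n − k + i holds for all 0 ≤ i ≤ k, where σ_i := min{|X| : X ⊆ E, s(X) ≥ i}. -/

import Mathlib

open Finset

/-- Generalized Singleton bound for demi-matroids: `σ_i ≤ n - k + i` for `0 ≤ i ≤ k`. -/
theorem demimatroid_singleton_bound_sigma {E : Type*} [Fintype E] [DecidableEq E]
    (s t : Finset E → ℕ)
    (hRs : ∀ X Y : Finset E, X ⊆ Y → s X ≤ s Y ∧ s Y ≤ Y.card)
    (hRt : ∀ X Y : Finset E, X ⊆ Y → t X ≤ t Y ∧ t Y ≤ Y.card)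
    (hD : ∀ X : Finset E, ((univ \ X).card : ℤ) - s (univ \ X) = (t univ : ℤ) - t X) :
    ∀ i ≤ s univ,
      sInf {m | ∃ X : Finset E, X.card = m ∧ i ≤ s X} ≤
        Fintype.card E - s univ + i := by
  intro i hi
  have hk : s univ ≤ Fintype.card E := by
    simpa using (hRs univ univ (subset_refl _)).2
  obtain ⟨Y, -, hYcard⟩ := Finset.exists_subset_card_eq (s := (univ : Finset E))
    (n := Fintype.card E - s univ + i) (by rw [Finset.card_univ]; omega)
  apply Nat.sInf_le
  refine ⟨Y, hYcard, ?_⟩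
  have h1 := hD (univ \ Y)
  rw [Finset.sdiff_sdiff_self_left, Finset.inter_eq_right.mpr (Finset.subset_univ Y)] at h1
  have h0 := hD ∅
  simp at h0
  have ht := (hRt ∅ (univ \ Y) (Finset.empty_subset _)).1
  omega
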